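/- (Toeplitz/Bessel determinant for asymmetric hopping, regime v > 1.) Let w ∈ ℂ, v > 1, and let φ̂_v ∈ ℝ be defined by cosh(φ̂_v) = v/√(v²−1) and sinh(φ̂_v) = 1/√(v²−1). Define ĉ_n = (1/2π) ∫_{-π}^{π} exp( −2iw√(v²−1) cos θ ) e^{-inθ} dθ for n ∈ ℤ. Then for every N ≥ 1, (1/N!) ∫_{[-π,π]^N} ∏_{1≤j<k≤N} |e^{iφ_j} − e^{iφ_k}|² ∏_{j=1}^{N} exp( 2w ( cos φ_j − i v sin φ_j ) ) (dφ_j/2π) = det( (i e^{φ̂_v})^{k−j} ĉ_{j−k} )_{j,k=1}^{N}. -/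

import Mathlib

open MeasureTheory Complex Finset
open scoped ENNReal NNReal

noncomputable section
namespace AsymHop

def term (a b : ℂ) (n : ℤ) (pq : ℕ × ℕ) : ℂ :=
  if (pq.1 : ℤ) - (pq.2 : ℤ) = n then
    a ^ pq.1 * b ^ pq.2 / ((pq.1.factorial : ℂ) * (pq.2.factorial : ℂ)) else 0

lemma term_scale (a b l : ℂ) (hl : l ≠ 0) (n : ℤ) (pq : ℕ × ℕ) :
    term (l * a) (b / l) n pq = l ^ n * term a b n pq := by
  unfold term
  by_cases h : (pq.1 : ℤ) - (pq.2 : ℤ) = n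
  · rw [if_pos h, if_pos h, mul_pow, div_pow]
    have hzp : l ^ pq.1 / l ^ pq.2 = l ^ n := by
      rw [← zpow_natCast l pq.1, ← zpow_natCast l pq.2, ← zpow_sub₀ hl, h]
    have h2 : (l : ℂ) ^ pq.2 ≠ 0 := pow_ne_zero _ hl
    rw [← hzp]
    field_simp
  · rw [if_neg h, if_neg h, mul_zero]

lemma tsum_term_scale (a b l : ℂ) (hl : l ≠ 0) (n : ℤ) :
    ∑' pq : ℕ × ℕ, term (l * a) (b / l) n pq = l ^ n * ∑' pq : ℕ × ℕ, term a b n pq := by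
  rw [← tsum_mul_left]
  exact tsum_congr (term_scale a b l hl n)

lemma euler (φ : ℝ) : Complex.exp (Complex.I * φ)
      = (Real.cos φ : ℂ) + (Real.sin φ : ℂ) * Complex.I := by
  rw [mul_comm, Complex.exp_mul_I, Complex.ofReal_cos, Complex.ofReal_sin]

lemma euler' (φ : ℝ) : Complex.exp (-(Complex.I * φ))
      = (Real.cos φ : ℂ) - (Real.sin φ : ℂ) * Complex.I := by
  have hconj : -(Complex.I * (φ:ℂ)) = (starRingEnd ℂ) (Complex.I * (φ:ℂ)) := by
    simp [map_mul, Complex.conj_I, Complex.conj_ofReal]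
  rw [hconj, Complex.exp_conj, euler]
  rw [map_add, map_mul, Complex.conj_I, Complex.conj_ofReal, Complex.conj_ofReal]
  ring

lemma symbol_lhs (w : ℂ) (v : ℝ) (φ : ℝ) :
    Complex.exp (2 * w * ((Real.cos φ : ℂ) - Complex.I * v * Real.sin φ))
      = Complex.exp ((w * (1 - v)) * Complex.exp (Complex.I * φ)
          + (w * (1 + v)) * Complex.exp (-(Complex.I * φ))) := by
  rw [euler, euler']
  congr 1
  ring

lemma symbol_rhs (w : ℂ) (v : ℝ) (θ : ℝ) :
    Complex.exp (-2 * Complex.I * w * (Real.sqrt (v ^ 2 - 1) : ℝ) * Real.cos θ)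
      = Complex.exp ((-Complex.I * w * (Real.sqrt (v ^ 2 - 1) : ℝ))
            * Complex.exp (Complex.I * θ)
          + (-Complex.I * w * (Real.sqrt (v ^ 2 - 1) : ℝ))
            * Complex.exp (-(Complex.I * θ))) := by
  rw [euler, euler']
  congr 1
  ring

lemma lambda_a (w : ℂ) (v : ℝ) (hv : 1 < v) (φv : ℝ)
    (hcosh : Real.cosh φv = v / Real.sqrt (v ^ 2 - 1))
    (hsinh : Real.sinh φv = 1 / Real.sqrt (v ^ 2 - 1)) :
    (Complex.I * (Real.exp φv : ℝ)) * (w * (1 - v)) = -Complex.I * w * (Real.sqrt (v ^ 2 - 1) : ℝ)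
    ∧ (w * (1 + v)) / (Complex.I * (Real.exp φv : ℝ)) = -Complex.I * w * (Real.sqrt (v ^ 2 - 1) : ℝ) := by
  have hs : (0:ℝ) < Real.sqrt (v ^ 2 - 1) := Real.sqrt_pos.2 (by nlinarith)
  have hsq : Real.sqrt (v ^ 2 - 1) * Real.sqrt (v ^ 2 - 1) = v ^ 2 - 1 :=
    Real.mul_self_sqrt (by nlinarith)
  have hexp : Real.exp φv = (v + 1) / Real.sqrt (v ^ 2 - 1) := by
    rw [← Real.cosh_add_sinh, hcosh, hsinh]
    field_simp
  have hr : ((v + 1) / Real.sqrt (v ^ 2 - 1)) * (1 - v) = -Real.sqrt (v ^ 2 - 1) := by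
    rw [div_mul_eq_mul_div, div_eq_iff hs.ne']
    nlinarith [hsq]
  have hc : ((((v + 1) / Real.sqrt (v ^ 2 - 1) : ℝ)) : ℂ) * ((1 : ℂ) - v)
      = -((Real.sqrt (v ^ 2 - 1) : ℝ) : ℂ) := by
    rw [show ((1:ℂ) - v) = ((1 - v : ℝ) : ℂ) by push_cast; ring, ← Complex.ofReal_mul, hr]
    push_cast
    ring
  constructor
  · rw [hexp]
    linear_combination (Complex.I * w) * hc
  · rw [hexp]
    have hX : (((v + 1) / Real.sqrt (v ^ 2 - 1) : ℝ) : ℂ) ≠ 0 := by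
      rw [ne_eq, Complex.ofReal_eq_zero]
      positivity
    rw [div_eq_iff (mul_ne_zero Complex.I_ne_zero hX)]
    have hc2 : ((Real.sqrt (v ^ 2 - 1) : ℝ) : ℂ) * (((v + 1) / Real.sqrt (v ^ 2 - 1) : ℝ) : ℂ)
        = ((v + 1 : ℝ) : ℂ) := by
      rw [← Complex.ofReal_mul]
      congr 1
      field_simp
    rw [show (-Complex.I * w * ((Real.sqrt (v ^ 2 - 1) : ℝ) : ℂ))
          * (Complex.I * (((v + 1) / Real.sqrt (v ^ 2 - 1) : ℝ) : ℂ))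
        = (-(Complex.I * Complex.I)) * (w * (((Real.sqrt (v ^ 2 - 1) : ℝ) : ℂ)
          * (((v + 1) / Real.sqrt (v ^ 2 - 1) : ℝ) : ℂ))) by ring,
      Complex.I_mul_I, hc2]
    push_cast
    ring

lemma orth (m : ℤ) :
    (∫ θ in (-Real.pi)..Real.pi, Complex.exp (Complex.I * m * θ))
      = if m = 0 then (2 * Real.pi : ℂ) else 0 := by
  rcases eq_or_ne m 0 with h | h
  · simp [h, two_mul]
  · rw [if_neg h]
    have hc : (Complex.I * m) ≠ 0 := by
      simp [Complex.I_ne_zero, h]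
    rw [integral_exp_mul_complex hc]
    have : Complex.exp (Complex.I * m * ((-Real.pi : ℝ) : ℂ))
        = Complex.exp (Complex.I * m * (Real.pi : ℂ)) := by
      rw [show (Complex.I * m * ((-Real.pi : ℝ) : ℂ))
          = Complex.I * m * (Real.pi : ℂ) + ((-m : ℤ) : ℂ) * (2 * Real.pi * Complex.I) by
        push_cast; ring]
      rw [Complex.exp_add, Complex.exp_int_mul_two_pi_mul_I, mul_one]
    rw [this, sub_self, zero_div]

lemma exp_tsum' (z : ℂ) : Complex.exp z = ∑' n : ℕ, z ^ n / n.factorial := by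
  rw [Complex.exp_eq_exp_ℂ, NormedSpace.exp_eq_tsum_div]

lemma summable_norm_aux (a : ℂ) (θ : ℝ) (s : ℝ) (hs : ‖Complex.exp (s * Complex.I * θ)‖ = 1) :
    Summable (fun p : ℕ => ‖(a * Complex.exp (s * Complex.I * θ)) ^ p / (p.factorial : ℂ)‖) := by
  have : (fun p : ℕ => ‖(a * Complex.exp (s * Complex.I * θ)) ^ p / (p.factorial : ℂ)‖)
      = fun p : ℕ => ‖a‖ ^ p / (p.factorial : ℝ) := by
    funext p
    rw [norm_div, norm_pow]
    simp [norm_mul, hs, Complex.norm_natCast]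
  rw [this]
  exact Real.summable_pow_div_factorial _

lemma integrand_expand (a b : ℂ) (n : ℤ) (θ : ℝ) :
    Complex.exp (a * Complex.exp (Complex.I * θ) + b * Complex.exp (-(Complex.I * θ)))
        * Complex.exp (-Complex.I * n * θ)
      = ∑' pq : ℕ × ℕ,
          (a ^ pq.1 * b ^ pq.2 / ((pq.1.factorial : ℂ) * (pq.2.factorial : ℂ)))
            * Complex.exp (Complex.I * (((pq.1 : ℤ) - (pq.2 : ℤ) - n : ℤ) : ℂ) * θ) := by
  rw [Complex.exp_add, exp_tsum' (a * Complex.exp (Complex.I * θ)),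
    exp_tsum' (b * Complex.exp (-(Complex.I * θ)))]
  have h1 : ‖Complex.exp ((1:ℝ) * Complex.I * θ)‖ = 1 := by
    rw [show ((1:ℝ) : ℂ) * Complex.I * θ = (θ : ℝ) * Complex.I by push_cast; ring]
    exact Complex.norm_exp_ofReal_mul_I θ
  have h2 : ‖Complex.exp ((-1:ℝ) * Complex.I * θ)‖ = 1 := by
    rw [show ((-1:ℝ) : ℂ) * Complex.I * θ = ((-θ : ℝ) : ℂ) * Complex.I by push_cast; ring]
    exact Complex.norm_exp_ofReal_mul_I (-θ)
  rw [tsum_mul_tsum_of_summable_norm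
    (by simpa using summable_norm_aux a θ 1 h1)
    (by simpa [show ((-1:ℝ):ℂ) * Complex.I * θ = -(Complex.I * θ) by push_cast; ring]
        using summable_norm_aux b θ (-1) h2)]
  rw [← tsum_mul_right]
  apply tsum_congr
  intro pq
  rw [mul_pow, mul_pow, ← Complex.exp_nat_mul, ← Complex.exp_nat_mul, div_mul_div_comm,
    show Complex.I * (((pq.1 : ℤ) - (pq.2 : ℤ) - n : ℤ) : ℂ) * θ
      = ((pq.1 : ℕ) : ℂ) * (Complex.I * θ) + (((pq.2 : ℕ) : ℂ) * (-(Complex.I * θ))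
        + -Complex.I * n * θ) by push_cast; ring,
    Complex.exp_add, Complex.exp_add]
  ring

lemma norm_C (a b : ℂ) (pq : ℕ × ℕ) :
    ‖a ^ pq.1 * b ^ pq.2 / ((pq.1.factorial : ℂ) * (pq.2.factorial : ℂ))‖
      = ‖a‖ ^ pq.1 / pq.1.factorial * (‖b‖ ^ pq.2 / pq.2.factorial) := by
  rw [norm_div, norm_mul, norm_mul, norm_pow, norm_pow]
  simp [Complex.norm_natCast]
  ring

lemma summable_normC (a b : ℂ) :
    Summable (fun pq : ℕ × ℕ =>
      ‖a‖ ^ pq.1 / pq.1.factorial * (‖b‖ ^ pq.2 / pq.2.factorial)) := by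
  apply Summable.mul_of_nonneg (Real.summable_pow_div_factorial _)
    (Real.summable_pow_div_factorial _)
  · intro p
    positivity
  · intro q
    positivity

lemma J_eq (a b : ℂ) (n : ℤ) :
    (∫ θ in (-Real.pi)..Real.pi,
        Complex.exp (a * Complex.exp (Complex.I * θ) + b * Complex.exp (-(Complex.I * θ)))
          * Complex.exp (-Complex.I * n * θ))
      = (2 * Real.pi : ℂ) * ∑' pq : ℕ × ℕ, term a b n pq := by
  have hpi : -Real.pi ≤ Real.pi := by linarith [Real.pi_pos]
  have hnormexp : ∀ (m : ℤ) (θ : ℝ), ‖Complex.exp (Complex.I * (m : ℂ) * (θ : ℂ))‖ = 1 := by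
    intro m θ
    rw [show Complex.I * (m : ℂ) * (θ : ℂ) = ((m * θ : ℝ) : ℂ) * Complex.I by push_cast; ring]
    exact Complex.norm_exp_ofReal_mul_I _
  simp_rw [intervalIntegral.integral_of_le hpi, integrand_expand a b n]
  rw [MeasureTheory.integral_tsum]
  · rw [← tsum_mul_left]
    apply tsum_congr
    intro pq
    rw [MeasureTheory.integral_const_mul, ← intervalIntegral.integral_of_le hpi, orth]
    unfold term
    by_cases h : (pq.1 : ℤ) - (pq.2 : ℤ) = n
    · rw [if_pos (by omega), if_pos h]
      ring
    · rw [if_neg (by omega), if_neg h]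
      ring
  · intro pq
    apply Continuous.aestronglyMeasurable
    fun_prop
  · have hb : ∀ pq : ℕ × ℕ,
        (∫⁻ θ, ‖(a ^ pq.1 * b ^ pq.2 / ((pq.1.factorial : ℂ) * (pq.2.factorial : ℂ)))
            * Complex.exp (Complex.I * (((pq.1 : ℤ) - (pq.2 : ℤ) - n : ℤ) : ℂ) * θ)‖ₑ
          ∂(volume.restrict (Set.Ioc (-Real.pi) Real.pi)))
        = (‖a ^ pq.1 * b ^ pq.2 / ((pq.1.factorial : ℂ) * (pq.2.factorial : ℂ))‖₊ : ℝ≥0∞)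
            * ENNReal.ofReal (2 * Real.pi) := by
      intro pq
      have : ∀ θ : ℝ, ‖(a ^ pq.1 * b ^ pq.2 / ((pq.1.factorial : ℂ) * (pq.2.factorial : ℂ)))
            * Complex.exp (Complex.I * (((pq.1 : ℤ) - (pq.2 : ℤ) - n : ℤ) : ℂ) * θ)‖₊
          = ‖a ^ pq.1 * b ^ pq.2 / ((pq.1.factorial : ℂ) * (pq.2.factorial : ℂ))‖₊ := by
        intro θ
        ext
        rw [coe_nnnorm, coe_nnnorm, norm_mul, hnormexp, mul_one]
      simp_rw [enorm_eq_nnnorm, this]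
      rw [MeasureTheory.lintegral_const, Measure.restrict_apply_univ, Real.volume_Ioc]
      congr 1
      ring_nf
    simp_rw [hb]
    rw [ENNReal.tsum_mul_right]
    apply ENNReal.mul_ne_top
    · rw [show (fun pq : ℕ × ℕ => (‖a ^ pq.1 * b ^ pq.2
          / ((pq.1.factorial : ℂ) * (pq.2.factorial : ℂ))‖₊ : ℝ≥0∞))
        = fun pq => ((‖a ^ pq.1 * b ^ pq.2
          / ((pq.1.factorial : ℂ) * (pq.2.factorial : ℂ))‖₊ : ℝ≥0) : ℝ≥0∞) from rfl]
      rw [ENNReal.tsum_coe_ne_top_iff_summable]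
      rw [← NNReal.summable_coe]
      simp_rw [coe_nnnorm, norm_C]
      exact summable_normC a b
    · exact ENNReal.ofReal_ne_top

lemma perm_double_sum {N : ℕ} (B : Matrix (Fin N) (Fin N) ℂ) :
    ∑ σ : Equiv.Perm (Fin N), ∑ τ : Equiv.Perm (Fin N),
      ((Equiv.Perm.sign σ : ℤ) : ℂ) * ((Equiv.Perm.sign τ : ℤ) : ℂ) * ∏ j, B (σ j) (τ j)
      = (N.factorial : ℂ) * B.det := by
  have hdet : ∀ τ : Equiv.Perm (Fin N),
      ∑ σ : Equiv.Perm (Fin N), ((Equiv.Perm.sign σ : ℤ) : ℂ) * ∏ j, B (σ j) (τ j)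
        = ((Equiv.Perm.sign τ : ℤ) : ℂ) * B.det := by
    intro τ
    have hre : ∑ σ : Equiv.Perm (Fin N), ((Equiv.Perm.sign σ : ℤ) : ℂ) * ∏ j, B (σ j) (τ j)
        = ∑ σ : Equiv.Perm (Fin N),
            ((Equiv.Perm.sign (σ * τ) : ℤ) : ℂ) * ∏ j, B ((σ * τ) j) (τ j) :=
      (Equiv.sum_comp (Equiv.mulRight τ)
        (fun σ => ((Equiv.Perm.sign σ : ℤ) : ℂ) * ∏ j, B (σ j) (τ j))).symm
    rw [hre]
    have : ∀ σ : Equiv.Perm (Fin N),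
        (∏ j, B ((σ * τ) j) (τ j)) = ∏ i, B (σ i) i := by
      intro σ
      exact Equiv.prod_comp τ (fun i => B (σ i) i)
    simp_rw [Equiv.Perm.sign_mul, this]
    rw [Matrix.det_apply]
    rw [Finset.mul_sum]
    apply Finset.sum_congr rfl
    intro σ _
    rw [Units.smul_def, zsmul_eq_mul]
    push_cast
    ring
  rw [Finset.sum_comm]
  have hrow : ∀ τ : Equiv.Perm (Fin N),
      ∑ σ : Equiv.Perm (Fin N),
        ((Equiv.Perm.sign σ : ℤ) : ℂ) * ((Equiv.Perm.sign τ : ℤ) : ℂ) * ∏ j, B (σ j) (τ j)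
      = ((Equiv.Perm.sign τ : ℤ) : ℂ) *
          ∑ σ : Equiv.Perm (Fin N), ((Equiv.Perm.sign σ : ℤ) : ℂ) * ∏ j, B (σ j) (τ j) := by
    intro τ
    rw [Finset.mul_sum]
    exact Finset.sum_congr rfl (fun σ _ => by ring)
  simp_rw [hrow, hdet]
  have : ∀ τ : Equiv.Perm (Fin N),
      ((Equiv.Perm.sign τ : ℤ) : ℂ) * (((Equiv.Perm.sign τ : ℤ) : ℂ) * B.det) = B.det := by
    intro τ
    rw [← mul_assoc, ← Complex.ofReal_intCast]
    rcases Int.units_eq_one_or (Equiv.Perm.sign τ) with h | h <;> simp [h]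
  simp_rw [this]
  rw [Finset.sum_const, Finset.card_univ, Fintype.card_perm, Fintype.card_fin, nsmul_eq_mul]

lemma det_vdm_sum {N : ℕ} (z : Fin N → ℂ) :
    (∏ j, ∏ k ∈ Finset.Ioi j, (z k - z j))
      = ∑ σ : Equiv.Perm (Fin N), ((Equiv.Perm.sign σ : ℤ) : ℂ) * ∏ i, z i ^ (σ i : ℕ) := by
  rw [← Matrix.det_vandermonde z, ← Matrix.det_transpose, Matrix.det_apply]
  apply Finset.sum_congr rfl
  intro σ _
  rw [Units.smul_def, zsmul_eq_mul]
  congr 1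

lemma prod_ite_Ioi {N : ℕ} (g : Fin N → Fin N → ℂ) :
    (∏ j, ∏ k, if j < k then g j k else 1) = ∏ j, ∏ k ∈ Finset.Ioi j, g j k := by
  apply Finset.prod_congr rfl
  intro j _
  rw [← Finset.prod_filter]
  congr 1
  ext k
  simp [Finset.mem_Ioi]

lemma vdm_pair {N : ℕ} (z w : Fin N → ℂ) :
    (∏ j, ∏ k, if j < k then (z j - z k) * (w j - w k) else 1)
      = (∑ σ : Equiv.Perm (Fin N), ((Equiv.Perm.sign σ : ℤ) : ℂ) * ∏ i, z i ^ (σ i : ℕ))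
        * (∑ τ : Equiv.Perm (Fin N), ((Equiv.Perm.sign τ : ℤ) : ℂ) * ∏ i, w i ^ (τ i : ℕ)) := by
  rw [prod_ite_Ioi, ← det_vdm_sum, ← det_vdm_sum]
  rw [← Finset.prod_mul_distrib]
  apply Finset.prod_congr rfl
  intro j _
  rw [← Finset.prod_mul_distrib]
  apply Finset.prod_congr rfl
  intro k _
  ring

lemma pi_integral_factor {N : ℕ} (g : Fin N → ℝ → ℂ) :
    (∫ φ : Fin N → ℝ in Set.univ.pi (fun _ => Set.Icc (-Real.pi) Real.pi),
        ∏ j, g j (φ j))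
      = ∏ j, ∫ x in Set.Icc (-Real.pi) Real.pi, g j x := by
  have hmeas : MeasurableSet (Set.univ.pi (fun _ : Fin N => Set.Icc (-Real.pi) Real.pi)) :=
    MeasurableSet.univ_pi (fun _ => measurableSet_Icc)
  rw [← MeasureTheory.integral_indicator hmeas]
  have hind : (Set.univ.pi (fun _ : Fin N => Set.Icc (-Real.pi) Real.pi)).indicator
        (fun φ : Fin N → ℝ => ∏ j, g j (φ j))
      = fun φ : Fin N → ℝ => ∏ j, (Set.Icc (-Real.pi) Real.pi).indicator (g j) (φ j) := by
    funext φ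
    by_cases h : φ ∈ Set.univ.pi (fun _ : Fin N => Set.Icc (-Real.pi) Real.pi)
    · rw [Set.indicator_of_mem h]
      apply Finset.prod_congr rfl
      intro j _
      rw [Set.indicator_of_mem (h j (Set.mem_univ j))]
    · rw [Set.indicator_of_notMem h]
      rw [Set.mem_pi] at h
      push_neg at h
      obtain ⟨j, -, hj⟩ := h
      exact (Finset.prod_eq_zero (Finset.mem_univ j)
        (by rw [Set.indicator_of_notMem hj])).symm
  rw [hind, volume_pi, MeasureTheory.integral_fintype_prod_eq_prod (E := fun _ : Fin N => ℝ)
    (f := fun j => (Set.Icc (-Real.pi) Real.pi).indicator (g j))]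
  apply Finset.prod_congr rfl
  intro j _
  rw [MeasureTheory.integral_indicator measurableSet_Icc]

lemma coefR_eq (w : ℂ) (v : ℝ) (hv : 1 < v) (φv : ℝ)
    (hcosh : Real.cosh φv = v / Real.sqrt (v ^ 2 - 1))
    (hsinh : Real.sinh φv = 1 / Real.sqrt (v ^ 2 - 1)) (n : ℤ) :
    (∫ θ in (-Real.pi)..Real.pi,
        Complex.exp (-2 * Complex.I * w * (Real.sqrt (v ^ 2 - 1) : ℝ) * Real.cos θ)
          * Complex.exp (-Complex.I * n * θ))
      = (Complex.I * (Real.exp φv : ℝ)) ^ n *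
        (∫ θ in (-Real.pi)..Real.pi,
          Complex.exp (2 * w * ((Real.cos θ : ℂ) - Complex.I * v * Real.sin θ))
            * Complex.exp (-Complex.I * n * θ)) := by
  obtain ⟨ha, hb⟩ := lambda_a w v hv φv hcosh hsinh
  have hlam : (Complex.I * ((Real.exp φv : ℝ) : ℂ)) ≠ 0 := by
    apply mul_ne_zero Complex.I_ne_zero
    rw [ne_eq, Complex.ofReal_eq_zero]
    exact (Real.exp_pos φv).ne'
  simp_rw [symbol_rhs w v, symbol_lhs w v]
  rw [J_eq, J_eq]
  have h2 : (∑' pq : ℕ × ℕ,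
        term ((Complex.I * ((Real.exp φv : ℝ) : ℂ)) * (w * (1 - v)))
          ((w * (1 + v)) / (Complex.I * ((Real.exp φv : ℝ) : ℂ))) n pq)
      = ∑' pq : ℕ × ℕ,
          term (-Complex.I * w * ((Real.sqrt (v ^ 2 - 1) : ℝ) : ℂ))
            (-Complex.I * w * ((Real.sqrt (v ^ 2 - 1) : ℝ) : ℂ)) n pq := by
    rw [ha, hb]
  rw [← h2, tsum_term_scale _ _ _ hlam]
  ring

lemma conj_exp_I (x : ℝ) :
    (starRingEnd ℂ) (Complex.exp (Complex.I * x)) = Complex.exp (-(Complex.I * x)) := by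
  rw [← Complex.exp_conj]
  congr 1
  rw [map_mul, Complex.conj_I, Complex.conj_ofReal]
  ring

lemma abs_sq_pair (x y : ℝ) :
    ((‖Complex.exp (Complex.I * x) - Complex.exp (Complex.I * y)‖ : ℝ) : ℂ) ^ 2
      = (Complex.exp (Complex.I * x) - Complex.exp (Complex.I * y))
        * (Complex.exp (-(Complex.I * x)) - Complex.exp (-(Complex.I * y))) := by
  rw [← Complex.ofReal_pow, Complex.sq_norm, ← Complex.mul_conj, map_sub, conj_exp_I, conj_exp_I]

def gfun (w : ℂ) (v : ℝ) {N : ℕ} (σ τ : Equiv.Perm (Fin N)) (j : Fin N) (x : ℝ) : ℂ :=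
  Complex.exp (Complex.I * x) ^ ((σ j : ℕ)) * Complex.exp (-(Complex.I * x)) ^ ((τ j : ℕ)) *
    (Complex.exp (2 * w * ((Real.cos x : ℂ) - Complex.I * v * Real.sin x)) *
      (1 / (2 * (Real.pi : ℂ))))

lemma integrand_expand_main {N : ℕ} (w : ℂ) (v : ℝ) (φ : Fin N → ℝ) :
    ((∏ j : Fin N, ∏ k : Fin N, if j < k then
        ((‖Complex.exp (Complex.I * φ j) - Complex.exp (Complex.I * φ k)‖ : ℝ) : ℂ) ^ 2
      else 1) *
      (∏ j : Fin N,
        Complex.exp (2 * w * ((Real.cos (φ j) : ℂ) - Complex.I * v * Real.sin (φ j)))) *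
      (1 / (2 * (Real.pi : ℂ))) ^ N)
    = ∑ σ : Equiv.Perm (Fin N), ∑ τ : Equiv.Perm (Fin N),
        ((Equiv.Perm.sign σ : ℤ) : ℂ) * ((Equiv.Perm.sign τ : ℤ) : ℂ) *
          ∏ j, gfun w v σ τ j (φ j) := by
  have h1 : (∏ j : Fin N, ∏ k : Fin N, if j < k then
        ((‖Complex.exp (Complex.I * φ j) - Complex.exp (Complex.I * φ k)‖ : ℝ) : ℂ) ^ 2
      else 1)
      = ∏ j : Fin N, ∏ k : Fin N, if j < k then
          (Complex.exp (Complex.I * φ j) - Complex.exp (Complex.I * φ k))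
            * (Complex.exp (-(Complex.I * φ j)) - Complex.exp (-(Complex.I * φ k))) else 1 := by
    apply Finset.prod_congr rfl
    intro j _
    apply Finset.prod_congr rfl
    intro k _
    exact if_congr Iff.rfl (abs_sq_pair _ _) rfl
  rw [h1, vdm_pair, Finset.sum_mul_sum]
  rw [Finset.sum_mul, Finset.sum_mul]
  apply Finset.sum_congr rfl
  intro σ _
  rw [Finset.sum_mul, Finset.sum_mul]
  apply Finset.sum_congr rfl
  intro τ _
  have hconst : (1 / (2 * (Real.pi : ℂ))) ^ N = ∏ _j : Fin N, (1 / (2 * (Real.pi : ℂ))) := by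
    rw [Finset.prod_const, Finset.card_univ, Fintype.card_fin]
  rw [hconst]
  have hprod : (∏ j, gfun w v σ τ j (φ j))
      = (∏ i, Complex.exp (Complex.I * φ i) ^ ((σ i : ℕ)))
      * (∏ i, Complex.exp (-(Complex.I * φ i)) ^ ((τ i : ℕ)))
      * ((∏ j : Fin N,
          Complex.exp (2 * w * ((Real.cos (φ j) : ℂ) - Complex.I * v * Real.sin (φ j))))
        * (∏ _j : Fin N, (1 / (2 * (Real.pi : ℂ))))) := by
    unfold gfun
    rw [Finset.prod_mul_distrib, Finset.prod_mul_distrib, Finset.prod_mul_distrib]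
  rw [hprod]
  ring

lemma heine {N : ℕ} (w : ℂ) (v : ℝ) (hN : 1 ≤ N) :
    (1 / (N.factorial : ℂ)) *
      ∫ φ : Fin N → ℝ in Set.univ.pi (fun _ => Set.Icc (-Real.pi) Real.pi),
        ((∏ j : Fin N, ∏ k : Fin N, if j < k then
            ((‖Complex.exp (Complex.I * φ j) - Complex.exp (Complex.I * φ k)‖ : ℝ) : ℂ) ^ 2
          else 1) *
          (∏ j : Fin N,
            Complex.exp (2 * w * ((Real.cos (φ j) : ℂ) - Complex.I * v * Real.sin (φ j)))) *
          (1 / (2 * (Real.pi : ℂ))) ^ N)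
      = Matrix.det (Matrix.of fun s t : Fin N =>
          (1 / (2 * (Real.pi : ℂ))) *
            ∫ θ in (-Real.pi)..Real.pi,
              Complex.exp (2 * w * ((Real.cos θ : ℂ) - Complex.I * v * Real.sin θ))
                * Complex.exp (-Complex.I * (((t : ℤ) - (s : ℤ) : ℤ) : ℂ) * θ)) := by
  have hpi : -Real.pi ≤ Real.pi := by linarith [Real.pi_pos]
  have hgcont : ∀ (σ τ : Equiv.Perm (Fin N)) (j : Fin N), Continuous (gfun w v σ τ j) := by
    intro σ τ j
    unfold gfun
    fun_prop
  have hcompact : IsCompact (Set.univ.pi (fun _ : Fin N => Set.Icc (-Real.pi) Real.pi)) :=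
    isCompact_univ_pi (fun _ => isCompact_Icc)
  have hint : ∀ (σ τ : Equiv.Perm (Fin N)),
      IntegrableOn (fun φ : Fin N → ℝ => ∏ j, gfun w v σ τ j (φ j))
        (Set.univ.pi (fun _ : Fin N => Set.Icc (-Real.pi) Real.pi)) volume := by
    intro σ τ
    apply ContinuousOn.integrableOn_compact hcompact
    apply Continuous.continuousOn
    unfold gfun
    fun_prop
  simp_rw [integrand_expand_main w v]
  rw [MeasureTheory.integral_finset_sum]
  swap
  · intro σ _
    apply integrable_finset_sum
    intro τ _
    exact ((hint σ τ).const_mul _)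
  have hent : ∀ (σ τ : Equiv.Perm (Fin N)) (j : Fin N),
      (∫ x in Set.Icc (-Real.pi) Real.pi, gfun w v σ τ j x)
        = (1 / (2 * (Real.pi : ℂ))) *
            ∫ θ in (-Real.pi)..Real.pi,
              Complex.exp (2 * w * ((Real.cos θ : ℂ) - Complex.I * v * Real.sin θ))
                * Complex.exp (-Complex.I * ((((τ j : ℤ) - (σ j : ℤ)) : ℤ) : ℂ) * θ) := by
    intro σ τ j
    rw [MeasureTheory.integral_Icc_eq_integral_Ioc, ← intervalIntegral.integral_of_le hpi]
    have hpt : ∀ x : ℝ, gfun w v σ τ j x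
        = (1 / (2 * (Real.pi : ℂ))) *
            (Complex.exp (2 * w * ((Real.cos x : ℂ) - Complex.I * v * Real.sin x))
              * Complex.exp (-Complex.I * ((((τ j : ℤ) - (σ j : ℤ)) : ℤ) : ℂ) * x)) := by
      intro x
      unfold gfun
      rw [← Complex.exp_nat_mul, ← Complex.exp_nat_mul, ← Complex.exp_add]
      rw [show (((σ j : ℕ) : ℂ) * (Complex.I * x) + ((τ j : ℕ) : ℂ) * -(Complex.I * x))
          = -Complex.I * ((((τ j : ℤ) - (σ j : ℤ)) : ℤ) : ℂ) * x by push_cast; ring]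
      ring
    simp_rw [hpt]
    rw [intervalIntegral.integral_const_mul]
  calc (1 / (N.factorial : ℂ)) * ∑ σ : Equiv.Perm (Fin N), ∫ φ : Fin N → ℝ in
          Set.univ.pi (fun _ => Set.Icc (-Real.pi) Real.pi),
          ∑ τ : Equiv.Perm (Fin N),
            ((Equiv.Perm.sign σ : ℤ) : ℂ) * ((Equiv.Perm.sign τ : ℤ) : ℂ) *
              ∏ j, gfun w v σ τ j (φ j)
      = (1 / (N.factorial : ℂ)) * ∑ σ : Equiv.Perm (Fin N), ∑ τ : Equiv.Perm (Fin N),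
          ((Equiv.Perm.sign σ : ℤ) : ℂ) * ((Equiv.Perm.sign τ : ℤ) : ℂ) *
            ∏ j, ∫ x in Set.Icc (-Real.pi) Real.pi, gfun w v σ τ j x := by
        congr 1
        apply Finset.sum_congr rfl
        intro σ _
        rw [MeasureTheory.integral_finset_sum]
        swap
        · intro τ _
          exact ((hint σ τ).const_mul _)
        apply Finset.sum_congr rfl
        intro τ _
        rw [MeasureTheory.integral_const_mul, pi_integral_factor]
    _ = Matrix.det (Matrix.of fun s t : Fin N =>
          (1 / (2 * (Real.pi : ℂ))) *
            ∫ θ in (-Real.pi)..Real.pi,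
              Complex.exp (2 * w * ((Real.cos θ : ℂ) - Complex.I * v * Real.sin θ))
                * Complex.exp (-Complex.I * (((t : ℤ) - (s : ℤ) : ℤ) : ℂ) * θ)) := by
        simp_rw [hent]
        set B : Matrix (Fin N) (Fin N) ℂ := Matrix.of fun s t : Fin N =>
          (1 / (2 * (Real.pi : ℂ))) *
            ∫ θ in (-Real.pi)..Real.pi,
              Complex.exp (2 * w * ((Real.cos θ : ℂ) - Complex.I * v * Real.sin θ))
                * Complex.exp (-Complex.I * (((t : ℤ) - (s : ℤ) : ℤ) : ℂ) * θ) with hB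
        have : ∀ (σ τ : Equiv.Perm (Fin N)) (j : Fin N),
            (1 / (2 * (Real.pi : ℂ))) *
              (∫ θ in (-Real.pi)..Real.pi,
                Complex.exp (2 * w * ((Real.cos θ : ℂ) - Complex.I * v * Real.sin θ))
                  * Complex.exp (-Complex.I * ((((τ j : ℤ) - (σ j : ℤ)) : ℤ) : ℂ) * θ))
            = B (σ j) (τ j) := by
          intro σ τ j
          rw [hB]
          rfl
        simp_rw [this, perm_double_sum B]
        rw [← mul_assoc]
        rw [one_div, inv_mul_cancel₀ (by exact_mod_cast N.factorial_ne_zero), one_mul]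


end AsymHop
end

open AsymHop in
/-- Toeplitz/Bessel determinant representation of the complex-time Loschmidt amplitude for
the XX chain with asymmetric hopping, regime `v > 1`. -/
theorem asymmetric_hopping_det_supercritical
    (w : ℂ) (v : ℝ) (hv : 1 < v) (φv : ℝ)
    (hcosh : Real.cosh φv = v / Real.sqrt (v ^ 2 - 1))
    (hsinh : Real.sinh φv = 1 / Real.sqrt (v ^ 2 - 1))
    (N : ℕ) (hN : 1 ≤ N) :
    (1 / (N.factorial : ℂ)) *
      ∫ φ : Fin N → ℝ in Set.univ.pi (fun _ => Set.Icc (-Real.pi) Real.pi),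
        ((∏ j : Fin N, ∏ k : Fin N, if j < k then
            ((‖Complex.exp (Complex.I * φ j) - Complex.exp (Complex.I * φ k)‖ : ℝ) : ℂ) ^ 2
          else 1) *
          (∏ j : Fin N,
            Complex.exp (2 * w * ((Real.cos (φ j) : ℂ) - Complex.I * v * Real.sin (φ j)))) *
          (1 / (2 * (Real.pi : ℂ))) ^ N) =
      Matrix.det (Matrix.of fun j k : Fin N =>
        (Complex.I * (Real.exp φv : ℝ)) ^ ((k : ℤ) - (j : ℤ)) *
          ((1 / (2 * (Real.pi : ℂ))) *
            ∫ θ in (-Real.pi)..Real.pi,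
              Complex.exp (-2 * Complex.I * w * (Real.sqrt (v ^ 2 - 1) : ℝ) * Real.cos θ) *
                Complex.exp (-Complex.I * ((j : ℤ) - (k : ℤ)) * θ))) := by
  rw [heine w v hN]
  have hlam : (Complex.I * ((Real.exp φv : ℝ) : ℂ)) ≠ 0 := by
    apply mul_ne_zero Complex.I_ne_zero
    rw [ne_eq, Complex.ofReal_eq_zero]
    exact (Real.exp_pos φv).ne'
  rw [← Matrix.det_transpose]
  congr 1
  ext j k
  rw [Matrix.transpose_apply, Matrix.of_apply, Matrix.of_apply]
  have key := coefR_eq w v hv φv hcosh hsinh ((j : ℤ) - (k : ℤ))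
  have hcast : ∀ θ : ℝ, Complex.exp (-Complex.I * ((((j : ℤ) - (k : ℤ)) : ℤ) : ℂ) * θ)
      = Complex.exp (-Complex.I * (((j : ℤ) : ℂ) - ((k : ℤ) : ℂ)) * θ) := by
    intro θ
    congr 2
    push_cast
    ring
  simp_rw [← hcast]
  rw [key]
  rw [show ((k : ℤ) - (j : ℤ)) = -((j : ℤ) - (k : ℤ)) by ring, zpow_neg]
  have hz : (Complex.I * ((Real.exp φv : ℝ) : ℂ)) ^ ((j : ℤ) - (k : ℤ)) ≠ 0 :=
    zpow_ne_zero _ hlam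
  have h3 : ∀ (L X c : ℂ), L ≠ 0 → c * X = L⁻¹ * (c * (L * X)) := by
    intro L X c hL
    field_simp
  exact h3 _ _ _ hz
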